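/- Let A be a commutative unital 𝕜-algebra. Let β : A → 𝒥¹(A) be the A-linear map β(a) = a·j₁(1), set Λ¹ := 𝒥¹(A)/im β, and let d : A → Λ¹ be the composition of j₁ with the natural projection. Then d is a 𝕜-linear derivation, and for every A-module P and every derivation X : A → P there exists a unique A-linear map φ^X : Λ¹ → P with X = φ^X ∘ d. Consequently the pair (Λ¹, d) is canonically isomorphic to the module of Kähler differentials Ω_{A/𝕜} together with its universal derivation. -/
import Mathlib


/-- `dop A a f = δ_a(f)`, where `δ_a(f)(p) = f (a • p) - a • f p`. -/
def dop (A : Type*) [CommRing A] {M N : Type*} [AddCommGroup M] [Module A M]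
    [AddCommGroup N] [Module A N] (a : A) (f : M → N) : M → N :=
  fun p => f (a • p) - a • f p

/-- `IsDiffOp A k f` : `f` is a differential operator of order at most `k` over `A`,
i.e. `δ_{a₀}(δ_{a₁}(⋯ δ_{a_k}(f) ⋯)) = 0` for all `a₀, …, a_k ∈ A`. -/
def IsDiffOp (A : Type*) [CommRing A] {M N : Type*} [AddCommGroup M] [Module A M]
    [AddCommGroup N] [Module A N] : ℕ → (M → N) → Prop
  | 0, f => ∀ a : A, dop A a f = 0
  | k + 1, f => ∀ a : A, IsDiffOp A k (dop A a f)

open scoped TensorProduct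

section
variable (𝕜 : Type*) [Field 𝕜] (A : Type*) [CommRing A] [Algebra 𝕜 A]

/-- `ε : A → A ⊗_𝕜 A`,  `ε(c) = 1 ⊗ c`. -/
noncomputable def epsFun : A → A ⊗[𝕜] A := fun c => (1 : A) ⊗ₜ[𝕜] c

/-- The submodule `μ¹ ⊆ A ⊗_𝕜 A` generated by all `δ_{a₀}(δ_{a₁}(ε))(c)`. -/
def muOne : Submodule A (A ⊗[𝕜] A) :=
  Submodule.span A {x | ∃ a₀ a₁ c : A, dop A a₀ (dop A a₁ (epsFun 𝕜 A)) c = x}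

/-- The module of 1-jets `𝒥¹(A) = (A ⊗_𝕜 A) / μ¹`. -/
abbrev JetOne := (A ⊗[𝕜] A) ⧸ muOne 𝕜 A

/-- `j₁ : A → 𝒥¹(A)`. -/
noncomputable def jetOne : A → JetOne 𝕜 A :=
  fun c => Submodule.Quotient.mk (epsFun 𝕜 A c)

/-- `Λ¹ = 𝒥¹(A) / im β`, where `β(a) = a • j₁(1)`, so `im β = A • j₁(1)`. -/
abbrev LambdaOne := JetOne 𝕜 A ⧸ Submodule.span A {jetOne 𝕜 A 1}

/-- `d : A → Λ¹`, the composition of `j₁` with the natural projection. -/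
noncomputable def dFun : A → LambdaOne 𝕜 A :=
  fun a => Submodule.Quotient.mk (jetOne 𝕜 A a)

end

section Aux
variable (𝕜 : Type*) [Field 𝕜] (A : Type*) [CommRing A] [Algebra 𝕜 A]

lemma dop_dop_epsFun (a b c : A) :
    dop A a (dop A b (epsFun 𝕜 A)) c =
      (1:A) ⊗ₜ[𝕜] (a*b*c) - a ⊗ₜ[𝕜] (b*c) - b ⊗ₜ[𝕜] (a*c) + (a*b) ⊗ₜ[𝕜] c := by
  simp only [dop, epsFun, smul_eq_mul, smul_sub, TensorProduct.smul_tmul', mul_one]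
  ring_nf

lemma mem_muOne (a b : A) :
    (1:A) ⊗ₜ[𝕜] (a*b) - a ⊗ₜ[𝕜] b - b ⊗ₜ[𝕜] a + (a*b) ⊗ₜ[𝕜] (1:A) ∈ muOne 𝕜 A := by
  apply Submodule.subset_span
  refine ⟨a, b, 1, ?_⟩
  rw [dop_dop_epsFun]
  ring_nf

lemma dFun_eq (x : A) : dFun 𝕜 A x =
    Submodule.Quotient.mk (Submodule.Quotient.mk ((1:A) ⊗ₜ[𝕜] x)) := rfl

lemma jetOne_one_mem : jetOne 𝕜 A 1 ∈ Submodule.span A {jetOne 𝕜 A 1} :=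
  Submodule.mem_span_singleton_self _

lemma dFun_one : dFun 𝕜 A 1 = 0 := by
  rw [dFun_eq, Submodule.Quotient.mk_eq_zero]
  exact jetOne_one_mem 𝕜 A

lemma dFun_isLinear : IsLinearMap 𝕜 (dFun 𝕜 A) := by
  constructor
  · intro x y
    rw [dFun_eq, dFun_eq, dFun_eq, TensorProduct.tmul_add, Submodule.Quotient.mk_add,
      Submodule.Quotient.mk_add]
  · intro k x
    rw [dFun_eq, dFun_eq, TensorProduct.tmul_smul, Submodule.Quotient.mk_smul,
      Submodule.Quotient.mk_smul]

lemma dFun_leibniz (a b : A) :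
    dFun 𝕜 A (a * b) = a • dFun 𝕜 A b + b • dFun 𝕜 A a := by
  have key : ((1:A) ⊗ₜ[𝕜] (a*b) - (a • ((1:A) ⊗ₜ[𝕜] b) + b • ((1:A) ⊗ₜ[𝕜] a)))
      - (-(a*b)) • ((1:A) ⊗ₜ[𝕜] (1:A)) =
      (1:A) ⊗ₜ[𝕜] (a*b) - a ⊗ₜ[𝕜] b - b ⊗ₜ[𝕜] a + (a*b) ⊗ₜ[𝕜] (1:A) := by
    simp only [TensorProduct.smul_tmul', smul_eq_mul, mul_one, neg_smul]
    abel
  have h2 : jetOne 𝕜 A (a*b) - (a • jetOne 𝕜 A b + b • jetOne 𝕜 A a)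
      = (-(a*b)) • jetOne 𝕜 A 1 := by
    show Submodule.Quotient.mk ((1:A) ⊗ₜ[𝕜] (a*b))
        - (a • Submodule.Quotient.mk ((1:A) ⊗ₜ[𝕜] b)
          + b • Submodule.Quotient.mk ((1:A) ⊗ₜ[𝕜] a))
      = (-(a*b)) • (Submodule.Quotient.mk ((1:A) ⊗ₜ[𝕜] (1:A)) : JetOne 𝕜 A)
    rw [← Submodule.Quotient.mk_smul, ← Submodule.Quotient.mk_smul, ← Submodule.Quotient.mk_smul,
      ← Submodule.Quotient.mk_add, ← Submodule.Quotient.mk_sub, Submodule.Quotient.eq]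
    rw [key]
    exact mem_muOne 𝕜 A a b
  have h4 : dFun 𝕜 A (a*b) - (a • dFun 𝕜 A b + b • dFun 𝕜 A a) = 0 := by
    have h3 : dFun 𝕜 A (a*b) - (a • dFun 𝕜 A b + b • dFun 𝕜 A a)
        = Submodule.Quotient.mk (jetOne 𝕜 A (a*b) - (a • jetOne 𝕜 A b + b • jetOne 𝕜 A a)) := by
      rw [Submodule.Quotient.mk_sub, Submodule.Quotient.mk_add, Submodule.Quotient.mk_smul,
        Submodule.Quotient.mk_smul]
      rfl
    rw [h3, h2, Submodule.Quotient.mk_eq_zero]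
    exact Submodule.smul_mem _ _ (jetOne_one_mem 𝕜 A)
  exact sub_eq_zero.mp h4

lemma span_range_dFun : Submodule.span A (Set.range (dFun 𝕜 A)) = ⊤ := by
  rw [eq_top_iff]
  rintro x -
  obtain ⟨y, rfl⟩ := Submodule.Quotient.mk_surjective _ x
  obtain ⟨t, rfl⟩ := Submodule.Quotient.mk_surjective _ y
  induction t using TensorProduct.induction_on with
  | zero => simp
  | tmul a b =>
      have : (Submodule.Quotient.mk (Submodule.Quotient.mk (a ⊗ₜ[𝕜] b) : JetOne 𝕜 A)
          : LambdaOne 𝕜 A) = a • dFun 𝕜 A b := by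
        rw [dFun_eq, ← Submodule.Quotient.mk_smul, ← Submodule.Quotient.mk_smul,
          TensorProduct.smul_tmul', smul_eq_mul, mul_one]
      rw [this]
      exact Submodule.smul_mem _ _ (Submodule.subset_span ⟨b, rfl⟩)
  | add u v hu hv =>
      rw [Submodule.Quotient.mk_add, Submodule.Quotient.mk_add]
      exact Submodule.add_mem _ hu hv

variable {P : Type*} [AddCommGroup P] [Module 𝕜 P] [Module A P] [IsScalarTower 𝕜 A P]

noncomputable def phiTensor (X : A →ₗ[𝕜] P) : (A ⊗[𝕜] A) →ₗ[A] P :=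
  TensorProduct.AlgebraTensorModule.lift (LinearMap.toSpanSingleton A (A →ₗ[𝕜] P) X)

@[simp] lemma phiTensor_tmul (X : A →ₗ[𝕜] P) (a b : A) :
    phiTensor 𝕜 A X (a ⊗ₜ[𝕜] b) = a • X b := by
  simp [phiTensor, LinearMap.toSpanSingleton]

theorem dFun_universal (X : A →ₗ[𝕜] P) (hX : ∀ a b : A, X (a * b) = a • X b + b • X a) :
    ∃! φ : LambdaOne 𝕜 A →ₗ[A] P, ⇑X = ⇑φ ∘ dFun 𝕜 A := by
  have hX1 : X 1 = 0 := by
    have := hX 1 1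
    simpa using this
  have hker : muOne 𝕜 A ≤ LinearMap.ker (phiTensor 𝕜 A X) := by
    rw [muOne, Submodule.span_le]
    rintro _ ⟨a, b, c, rfl⟩
    rw [SetLike.mem_coe, LinearMap.mem_ker, dop_dop_epsFun]
    simp only [map_add, map_sub, phiTensor_tmul, one_smul]
    simp only [hX, smul_add, smul_smul]
    module
  set Φ₁ : JetOne 𝕜 A →ₗ[A] P := Submodule.liftQ _ (phiTensor 𝕜 A X) hker with hΦ₁
  have hone : Submodule.span A {jetOne 𝕜 A 1} ≤ LinearMap.ker Φ₁ := by
    rw [Submodule.span_le, Set.singleton_subset_iff]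
    rw [SetLike.mem_coe, LinearMap.mem_ker]
    show Φ₁ (Submodule.Quotient.mk ((1:A) ⊗ₜ[𝕜] (1:A))) = 0
    rw [hΦ₁, Submodule.liftQ_apply, phiTensor_tmul, hX1, smul_zero]
  set φ : LambdaOne 𝕜 A →ₗ[A] P := Submodule.liftQ _ Φ₁ hone with hφ
  have hfact : ⇑X = ⇑φ ∘ dFun 𝕜 A := by
    funext a
    show X a = φ (Submodule.Quotient.mk (jetOne 𝕜 A a))
    rw [hφ, Submodule.liftQ_apply]
    show X a = Φ₁ (Submodule.Quotient.mk ((1:A) ⊗ₜ[𝕜] a))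
    rw [hΦ₁, Submodule.liftQ_apply, phiTensor_tmul, one_smul]
  refine ⟨φ, hfact, ?_⟩
  intro ψ hψ
  apply LinearMap.ext_on (span_range_dFun 𝕜 A)
  rintro _ ⟨a, rfl⟩
  have := congrFun hψ a
  have h2 := congrFun hfact a
  simp only [Function.comp_apply] at this h2
  rw [← this, ← h2]

end Aux

section Der
variable (𝕜 : Type*) [Field 𝕜] (A : Type*) [CommRing A] [Algebra 𝕜 A]

noncomputable def dDer : Derivation 𝕜 A (LambdaOne 𝕜 A) :=
  { toLinearMap := IsLinearMap.mk' _ (dFun_isLinear 𝕜 A)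
    map_one_eq_zero' := dFun_one 𝕜 A
    leibniz' := dFun_leibniz 𝕜 A }

theorem lambdaOne_kaehler_iso :
    ∃ e : LambdaOne 𝕜 A ≃ₗ[A] KaehlerDifferential 𝕜 A,
      ∀ a : A, e (dFun 𝕜 A a) = KaehlerDifferential.D 𝕜 A a := by
  obtain ⟨φ, hφ, -⟩ := dFun_universal 𝕜 A (KaehlerDifferential.D 𝕜 A).toLinearMap
    (fun a b => (KaehlerDifferential.D 𝕜 A).leibniz a b)
  set ψ : KaehlerDifferential 𝕜 A →ₗ[A] LambdaOne 𝕜 A :=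
    (dDer 𝕜 A).liftKaehlerDifferential with hψ
  have hψD : ∀ a : A, ψ (KaehlerDifferential.D 𝕜 A a) = dFun 𝕜 A a := fun a => by
    rw [hψ, Derivation.liftKaehlerDifferential_comp_D]
    rfl
  have hφd : ∀ a : A, φ (dFun 𝕜 A a) = KaehlerDifferential.D 𝕜 A a := fun a =>
    (congrFun hφ a).symm
  have h1 : φ.comp ψ = LinearMap.id := by
    apply LinearMap.ext_on (KaehlerDifferential.span_range_derivation 𝕜 A)
    rintro _ ⟨a, rfl⟩
    simp [hψD, hφd]
  have h2 : ψ.comp φ = LinearMap.id := by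
    apply LinearMap.ext_on (span_range_dFun 𝕜 A)
    rintro _ ⟨a, rfl⟩
    simp [hψD, hφd]
  exact ⟨LinearEquiv.ofLinear φ ψ h1 h2, hφd⟩

end Der

/-- `d : A → Λ¹ = 𝒥¹(A)/im β` is a `𝕜`-linear derivation; every
derivation `X : A → P` factors uniquely as `X = φ^X ∘ d` with `φ^X : Λ¹ → P`
`A`-linear;  consequently `(Λ¹, d)` is canonically isomorphic to the module of Kähler
differentials `Ω_{A/𝕜}` with its universal derivation. -/
theorem lambdaOne_universal_and_kaehler
    (𝕜 : Type*) [Field 𝕜] (A : Type*) [CommRing A] [Algebra 𝕜 A] :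
    -- d is a 𝕜-linear derivation
    (IsLinearMap 𝕜 (dFun 𝕜 A) ∧
      ∀ a b : A, dFun 𝕜 A (a * b) = a • dFun 𝕜 A b + b • dFun 𝕜 A a) ∧
    -- universal property among derivations with values in arbitrary A-modules
    (∀ (P : Type*) [AddCommGroup P] [Module 𝕜 P] [Module A P] [IsScalarTower 𝕜 A P],
      ∀ X : A →ₗ[𝕜] P, (∀ a b : A, X (a * b) = a • X b + b • X a) →
        ∃! φ : LambdaOne 𝕜 A →ₗ[A] P, ⇑X = ⇑φ ∘ dFun 𝕜 A) ∧
    -- canonical isomorphism with the Kähler differentials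
    (∃ e : LambdaOne 𝕜 A ≃ₗ[A] KaehlerDifferential 𝕜 A,
      ∀ a : A, e (dFun 𝕜 A a) = KaehlerDifferential.D 𝕜 A a) := by
  refine ⟨⟨dFun_isLinear 𝕜 A, dFun_leibniz 𝕜 A⟩, ?_, lambdaOne_kaehler_iso 𝕜 A⟩
  intro P _ _ _ _ X hX
  exact dFun_universal 𝕜 A X hX
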